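/- Existence of a maximal independent set for a bounded kernel: let k : Ω×Ω → ℝ≥0 be a bounded measurable kernel on a probability space (Ω,μ). Define α(k) = sup{μ(A) : A measurable, k = 0 μ⊗μ-a.e. on A×A}. Then the supremum is attained: there exists a measurable set A with k = 0 a.e. on A×A and μ(A) = α(k). -/

import Mathlib

open MeasureTheory Filter Set Topology
open scoped ENNReal
open scoped Function

set_option linter.unusedSectionVars false
set_option maxHeartbeats 1000000

section aux
variable {Ω : Type*} [MeasurableSpace Ω]

lemma my_integrable_of_bound {X : Type*} [MeasurableSpace X] (π : Measure X) [IsFiniteMeasure π]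
    {f : X → ℝ} (hf : Measurable f) (M : ℝ) (h : ∀ x, |f x| ≤ M) : Integrable f π :=
  (integrable_const M).mono' hf.aestronglyMeasurable (Eventually.of_forall h)

/-- Finite linear combinations of indicators of measurable rectangles. -/
inductive IsRC : (Ω × Ω → ℝ) → Prop
  | rect (c : ℝ) (E G : Set Ω) (hE : MeasurableSet E) (hG : MeasurableSet G) :
      IsRC fun p => c * E.indicator 1 p.1 * G.indicator 1 p.2
  | add {f g} : IsRC f → IsRC g → IsRC fun p => f p + g p
  | smul (r : ℝ) {f} : IsRC f → IsRC fun p => r * f p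

lemma IsRC.congr {f g : Ω × Ω → ℝ} (h : IsRC f) (e : ∀ p, f p = g p) : IsRC g := by
  rwa [show g = f from (funext e).symm]

lemma IsRC.measurable {f : Ω × Ω → ℝ} (h : IsRC f) : Measurable f := by
  induction h with
  | rect c E G hE hG =>
    exact (measurable_const.mul (((measurable_one.indicator hE).comp measurable_fst))).mul
      ((measurable_one.indicator hG).comp measurable_snd)
  | add h1 h2 ih1 ih2 => exact ih1.add ih2
  | smul r h ih => exact measurable_const.mul ih

lemma abs_indicator_one_le {E : Set Ω} (x : Ω) : |E.indicator (1 : Ω → ℝ) x| ≤ 1 := by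
  by_cases hx : x ∈ E <;> simp [Set.indicator, hx]

lemma IsRC.bound {f : Ω × Ω → ℝ} (h : IsRC f) : ∃ M : ℝ, ∀ p, |f p| ≤ M := by
  induction h with
  | rect c E G hE hG =>
    refine ⟨|c|, fun p => ?_⟩
    rw [abs_mul, abs_mul]
    have h1 := abs_indicator_one_le (E := E) p.1
    have h2 := abs_indicator_one_le (E := G) p.2
    have h3 := abs_nonneg (E.indicator (1 : Ω → ℝ) p.1)
    have h4 := abs_nonneg (G.indicator (1 : Ω → ℝ) p.2)
    have h5 := abs_nonneg c
    calc |c| * |E.indicator 1 p.1| * |G.indicator 1 p.2|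
        ≤ |c| * 1 * 1 :=
          mul_le_mul (mul_le_mul le_rfl h1 h3 h5) h2 h4 (by positivity)
      _ = |c| := by ring
  | add h1 h2 ih1 ih2 =>
    obtain ⟨M1, hM1⟩ := ih1; obtain ⟨M2, hM2⟩ := ih2
    exact ⟨M1 + M2, fun p => (abs_add_le _ _).trans (add_le_add (hM1 p) (hM2 p))⟩
  | smul r h ih =>
    obtain ⟨M, hM⟩ := ih
    refine ⟨|r| * M, fun p => ?_⟩
    rw [abs_mul]
    have h0 : (0:ℝ) ≤ |r| := abs_nonneg r
    exact mul_le_mul_of_nonneg_left (hM p) h0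

lemma IsRC.zero : IsRC (fun _ : Ω × Ω => (0:ℝ)) :=
  (IsRC.rect 0 ∅ ∅ MeasurableSet.empty MeasurableSet.empty).congr (by simp)

lemma IsRC.finsetSum (m : ℕ) (F : ℕ → Ω × Ω → ℝ) (hF : ∀ j, IsRC (F j)) :
    IsRC (fun p => ∑ j ∈ Finset.range m, F j p) := by
  induction m with
  | zero => exact IsRC.zero.congr (by simp)
  | succ n ih => exact (ih.add (hF n)).congr (by intro p; rw [Finset.sum_range_succ])

lemma IsRC.one_sub {f : Ω × Ω → ℝ} (h : IsRC f) : IsRC (fun p => 1 - f p) := by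
  have h1 : IsRC (fun p : Ω × Ω => (1:ℝ) * Set.univ.indicator 1 p.1 * Set.univ.indicator 1 p.2) :=
    IsRC.rect 1 univ univ MeasurableSet.univ MeasurableSet.univ
  exact (h1.add ((IsRC.smul (-1) h))).congr (by intro p; simp; ring)

lemma tail_tendsto {X : Type*} [MeasurableSpace X] (ρ : Measure X) [IsFiniteMeasure ρ]
    (f : ℕ → Set X) (hm : ∀ i, MeasurableSet (f i)) (hd : Pairwise (Disjoint on f)) :
    Tendsto (fun m => (ρ (⋃ i, f (i + m))).toReal) atTop (𝓝 0) := by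
  have h1 : ∀ m, ρ (⋃ i, f (i + m)) = ∑' i, ρ (f (i + m)) := by
    intro m
    exact measure_iUnion (fun i j hij => hd (by omega)) (fun i => hm _)
  have hne : ∑' i, ρ (f i) ≠ ∞ := by
    rw [← measure_iUnion hd hm]
    exact measure_ne_top ρ _
  have h2 := ENNReal.tendsto_sum_nat_add (fun i => ρ (f i)) hne
  have h3 : Tendsto (fun m => (∑' i, ρ (f (i + m))).toReal) atTop (𝓝 ((0:ℝ≥0∞)).toReal) :=
    (ENNReal.tendsto_toReal (by simp)).comp h2
  simpa [h1] using h3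

lemma ulim_exists (U : Ultrafilter ℕ) (a : ℕ → ℝ) (h : ∀ n, a n ∈ Set.Icc (0:ℝ) 1) :
    ∃ x ∈ Set.Icc (0:ℝ) 1, Tendsto a U (𝓝 x) := by
  obtain ⟨x, hx, hle⟩ := (isCompact_Icc (a := (0:ℝ)) (b := 1)).ultrafilter_le_nhds (U.map a)
    (by
      rw [Filter.le_principal_iff]
      exact Filter.mem_map.2 (Eventually.of_forall h))
  exact ⟨x, hx, hle⟩



lemma abs_sub_le_one_add {a b M : ℝ} (ha : |a| ≤ 1) (hb : |b| ≤ M) : |a - b| ≤ 1 + M := by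
  calc |a - b| = |a + -b| := by rw [sub_eq_add_neg]
    _ ≤ |a| + |-b| := abs_add_le _ _
    _ ≤ 1 + M := by rw [abs_neg]; exact add_le_add ha hb

lemma rc_approx (π : Measure (Ω × Ω)) [IsFiniteMeasure π] :
    ∀ ⦃W : Set (Ω × Ω)⦄, MeasurableSet W → ∀ ε : ℝ, 0 < ε →
      ∃ f, IsRC f ∧ ∫ p, |W.indicator 1 p - f p| ∂π ≤ ε := by
  refine MeasurableSpace.induction_on_inter
    (C := fun W _ => ∀ ε : ℝ, 0 < ε → ∃ f, IsRC f ∧ ∫ p, |W.indicator 1 p - f p| ∂π ≤ ε)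
    generateFrom_prod.symm isPiSystem_prod ?_ ?_ ?_ ?_
  · intro ε hε
    refine ⟨_, IsRC.zero, ?_⟩
    simpa using hε.le
  · rintro t ⟨E, hE, G, hG, rfl⟩ ε hε
    refine ⟨_, IsRC.rect 1 E G hE hG, ?_⟩
    have hpt : ∀ p : Ω × Ω,
        |(E ×ˢ G).indicator (1 : Ω × Ω → ℝ) p - 1 * E.indicator 1 p.1 * G.indicator 1 p.2| = 0 := by
      intro p
      by_cases h1 : p.1 ∈ E <;> by_cases h2 : p.2 ∈ G <;>
        simp [Set.indicator_apply, Set.mem_prod, h1, h2]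
    calc ∫ p, |(E ×ˢ G).indicator (1 : Ω × Ω → ℝ) p
            - 1 * E.indicator 1 p.1 * G.indicator 1 p.2| ∂π
        = ∫ _p, (0:ℝ) ∂π := integral_congr_ae (Eventually.of_forall hpt)
      _ ≤ ε := by simpa using hε.le
  · intro t htm iht ε hε
    obtain ⟨f, hf, herr⟩ := iht ε hε
    refine ⟨_, hf.one_sub, ?_⟩
    have hpt : ∀ p, |tᶜ.indicator (1 : Ω × Ω → ℝ) p - (1 - f p)| = |t.indicator 1 p - f p| := by
      intro p
      by_cases hp : p ∈ t <;>
        simp [Set.indicator_apply, hp, abs_sub_comm]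
    calc ∫ p, |tᶜ.indicator (1 : Ω × Ω → ℝ) p - (1 - f p)| ∂π
        = ∫ p, |t.indicator 1 p - f p| ∂π := integral_congr_ae (Eventually.of_forall hpt)
      _ ≤ ε := herr
  · intro W hdisj hmeas ihW ε hε
    obtain ⟨m, hm⟩ : ∃ m, (π (⋃ i, W (i + m))).toReal < ε/2 :=
      ((tail_tendsto π W hmeas hdisj).eventually (gt_mem_nhds (by positivity))).exists
    choose F hF herrF using fun j => ihW j (ε/(2*(m+1))) (by positivity)
    obtain ⟨MS, hMS⟩ := (IsRC.finsetSum m F hF).bound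
    choose MF hMF using fun j => (hF j).bound
    refine ⟨_, IsRC.finsetSum m F hF, ?_⟩
    set V := ⋃ j ∈ Finset.range m, W j with hVdef
    have hVmeas : MeasurableSet V := (Finset.range m).measurableSet_biUnion (fun j _ => hmeas j)
    have hWmeas : MeasurableSet (⋃ i, W i) := MeasurableSet.iUnion hmeas
    have hdm : MeasurableSet ((⋃ i, W i) \ V) := hWmeas.diff hVmeas
    -- pointwise decomposition
    have hsum : ∀ p : Ω × Ω, (⋃ i, W i).indicator (1 : Ω × Ω → ℝ) p
        = ((⋃ i, W i) \ V).indicator 1 p + ∑ j ∈ Finset.range m, (W j).indicator 1 p := by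
      intro p
      by_cases hp : p ∈ ⋃ i, W i
      · by_cases hpV : p ∈ V
        · obtain ⟨j0, hj0m, hj0⟩ : ∃ j0 ∈ Finset.range m, p ∈ W j0 := by
            simpa [hVdef, Set.mem_iUnion₂] using hpV
          have h3 : ∑ j ∈ Finset.range m, (W j).indicator (1 : Ω × Ω → ℝ) p = 1 := by
            rw [Finset.sum_eq_single_of_mem j0 hj0m]
            · simp [Set.indicator_of_mem hj0]
            · intro j _ hjne
              have : p ∉ W j := fun hpj =>
                (Set.disjoint_left.1 (hdisj hjne)) hpj hj0
              simp [Set.indicator_of_notMem this]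
          rw [Set.indicator_of_mem hp, Set.indicator_of_notMem (fun h => h.2 hpV), h3]
          simp
        · have h3 : ∑ j ∈ Finset.range m, (W j).indicator (1 : Ω × Ω → ℝ) p = 0 := by
            apply Finset.sum_eq_zero
            intro j hj
            have : p ∉ W j := fun hpj => hpV (Set.mem_biUnion hj hpj)
            simp [Set.indicator_of_notMem this]
          have hdmem : p ∈ (⋃ i, W i) \ V := ⟨hp, hpV⟩
          rw [Set.indicator_of_mem hp, Set.indicator_of_mem hdmem, h3]
          simp
      · have h3 : ∑ j ∈ Finset.range m, (W j).indicator (1 : Ω × Ω → ℝ) p = 0 := by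
          apply Finset.sum_eq_zero
          intro j _
          have : p ∉ W j := fun hpj => hp (Set.mem_iUnion.2 ⟨j, hpj⟩)
          simp [Set.indicator_of_notMem this]
        rw [Set.indicator_of_notMem hp, Set.indicator_of_notMem (fun h => hp h.1), h3]
        simp
    have hpt : ∀ p, |(⋃ i, W i).indicator (1 : Ω × Ω → ℝ) p - ∑ j ∈ Finset.range m, F j p|
        ≤ ((⋃ i, W i) \ V).indicator 1 p
          + ∑ j ∈ Finset.range m, |(W j).indicator 1 p - F j p| := by
      intro p
      calc |(⋃ i, W i).indicator (1 : Ω × Ω → ℝ) p - ∑ j ∈ Finset.range m, F j p|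
          = |((⋃ i, W i) \ V).indicator 1 p
              + ∑ j ∈ Finset.range m, ((W j).indicator 1 p - F j p)| := by
            rw [hsum p, Finset.sum_sub_distrib]; ring_nf
        _ ≤ |((⋃ i, W i) \ V).indicator (1 : Ω × Ω → ℝ) p|
              + |∑ j ∈ Finset.range m, ((W j).indicator 1 p - F j p)| := abs_add_le _ _
        _ ≤ ((⋃ i, W i) \ V).indicator 1 p
              + ∑ j ∈ Finset.range m, |(W j).indicator 1 p - F j p| := by
            apply add_le_add
            · exact le_of_eq (abs_of_nonneg (Set.indicator_nonneg (fun _ _ => zero_le_one) p))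
            · exact Finset.abs_sum_le_sum_abs _ _
    -- integrability
    have int1 : Integrable (fun p => ((⋃ i, W i) \ V).indicator (1 : Ω × Ω → ℝ) p) π :=
      my_integrable_of_bound π (measurable_one.indicator hdm) 1 abs_indicator_one_le
    have intj : ∀ j, Integrable (fun p => |(W j).indicator (1 : Ω × Ω → ℝ) p - F j p|) π := by
      intro j
      exact my_integrable_of_bound π
        ((measurable_one.indicator (hmeas j)).sub (hF j).measurable).abs (1 + MF j)
        (fun p => by rw [abs_abs]; exact abs_sub_le_one_add (abs_indicator_one_le _) (hMF j p))
    have intsum : Integrable (fun p => ∑ j ∈ Finset.range m, |(W j).indicator (1:Ω×Ω→ℝ) p - F j p|) π :=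
      integrable_finset_sum _ (fun j _ => intj j)
    have intLHS : Integrable (fun p => |(⋃ i, W i).indicator (1:Ω×Ω→ℝ) p - ∑ j ∈ Finset.range m, F j p|) π :=
      my_integrable_of_bound π
        ((measurable_one.indicator hWmeas).sub (IsRC.finsetSum m F hF).measurable).abs (1 + MS)
        (fun p => by rw [abs_abs]; exact abs_sub_le_one_add (abs_indicator_one_le _) (hMS p))
    calc ∫ p, |(⋃ i, W i).indicator (1:Ω×Ω→ℝ) p - ∑ j ∈ Finset.range m, F j p| ∂π
        ≤ ∫ p, (((⋃ i, W i) \ V).indicator 1 p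
            + ∑ j ∈ Finset.range m, |(W j).indicator 1 p - F j p|) ∂π :=
          integral_mono intLHS (int1.add intsum) hpt
      _ = (π ((⋃ i, W i) \ V)).toReal
            + ∑ j ∈ Finset.range m, ∫ p, |(W j).indicator 1 p - F j p| ∂π := by
          rw [integral_add int1 intsum, integral_indicator_one hdm, measureReal_def,
            integral_finset_sum _ (fun j _ => intj j)]
      _ ≤ ε/2 + ∑ _j ∈ Finset.range m, ε/(2*(m+1)) := by
          apply add_le_add
          · apply le_of_lt (lt_of_le_of_lt _ hm)
            apply ENNReal.toReal_mono (measure_ne_top π _)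
            apply measure_mono
            intro x hx
            obtain ⟨j, hj⟩ := Set.mem_iUnion.1 hx.1
            have hjm : m ≤ j := by
              by_contra hlt
              exact hx.2 (Set.mem_biUnion (Finset.mem_range.2 (by omega)) hj)
            exact Set.mem_iUnion.2 ⟨j - m, by rwa [Nat.sub_add_cancel hjm]⟩
          · exact Finset.sum_le_sum (fun j _ => herrF j)
      _ ≤ ε := by
          rw [Finset.sum_const, Finset.card_range, nsmul_eq_mul]
          have h1 : (0:ℝ) < 2 * ((m:ℝ)+1) := by positivity
          have h2 : (m:ℝ) * (ε / (2 * ((m:ℝ)+1))) ≤ ε / 2 := by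
            rw [mul_div_assoc', div_le_div_iff₀ h1 two_pos]
            nlinarith [hε.le]
          linarith [h2]

lemma abs_sub_le_add' {a b A B : ℝ} (ha : |a| ≤ A) (hb : |b| ≤ B) : |a - b| ≤ A + B := by
  calc |a - b| = |a + -b| := by rw [sub_eq_add_neg]
    _ ≤ |a| + |-b| := abs_add_le _ _
    _ ≤ A + B := by rw [abs_neg]; exact add_le_add ha hb

lemma rc_approx_kernel (π : Measure (Ω × Ω)) [IsProbabilityMeasure π] {κ : Ω × Ω → ℝ}
    (hκ : Measurable κ) (hnn : ∀ p, 0 ≤ κ p) {C : ℝ} (hC : ∀ p, κ p ≤ C) {ε : ℝ} (hε : 0 < ε) :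
    ∃ f, IsRC f ∧ ∫ p, |κ p - f p| ∂π ≤ ε := by
  by_cases hne : Nonempty (Ω × Ω)
  swap
  · exfalso
    have huniv : (univ : Set (Ω × Ω)) = ∅ := Set.univ_eq_empty_iff.2 (not_nonempty_iff.1 hne)
    have := measure_univ (μ := π)
    rw [huniv] at this
    simp at this
  obtain ⟨p0⟩ := hne
  have hC0 : 0 ≤ C := le_trans (hnn p0) (hC p0)
  set δ := ε/2 with hδdef
  have hδ : 0 < δ := by positivity
  set N := Nat.floor (C/δ) + 1 with hNdef
  have hNpos : 0 < (N:ℝ) := by positivity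
  set B : ℕ → Set (Ω × Ω) := fun j => κ ⁻¹' (Set.Ico (δ*j) (δ*(j+1))) with hBdef
  have hBmeas : ∀ j, MeasurableSet (B j) := fun j => hκ measurableSet_Ico
  set js : Ω × Ω → ℕ := fun p => Nat.floor (κ p / δ) with hjsdef
  have h1 : ∀ p, δ * js p ≤ κ p := by
    intro p
    have h := Nat.floor_le (div_nonneg (hnn p) hδ.le)
    calc δ * js p ≤ δ * (κ p / δ) := mul_le_mul_of_nonneg_left h hδ.le
      _ = κ p := by rw [mul_comm, div_mul_cancel₀ _ hδ.ne']
  have h2 : ∀ p, κ p < δ * (js p + 1) := by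
    intro p
    have h := Nat.lt_floor_add_one (κ p / δ)
    calc κ p = (κ p / δ) * δ := by rw [div_mul_cancel₀ _ hδ.ne']
      _ < ((js p : ℝ) + 1) * δ := by exact mul_lt_mul_of_pos_right h hδ
      _ = δ * (js p + 1) := by ring
  have h3 : ∀ p, js p < N := by
    intro p
    have : js p ≤ Nat.floor (C/δ) :=
      Nat.floor_mono ((div_le_div_iff_of_pos_right hδ).2 (hC p))
    omega
  have h4 : ∀ p, p ∈ B (js p) := fun p => ⟨h1 p, h2 p⟩
  have h5 : ∀ p j, p ∈ B j → j = js p := by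
    intro p j hpj
    obtain ⟨hl, hr⟩ := hpj
    symm
    rw [hjsdef]
    apply (Nat.floor_eq_iff (div_nonneg (hnn p) hδ.le)).2
    constructor
    · rw [le_div_iff₀ hδ]; linarith [hl]
    · rw [div_lt_iff₀ hδ]; push_cast; linarith [hr]
  set s : Ω × Ω → ℝ := fun p => ∑ j ∈ Finset.range N, (δ*j) * (B j).indicator 1 p with hsdef
  have hs : ∀ p, s p = δ * js p := by
    intro p
    show ∑ j ∈ Finset.range N, δ * (j:ℝ) * (B j).indicator 1 p = δ * ↑(js p)
    rw [Finset.sum_eq_single_of_mem (js p) (Finset.mem_range.2 (h3 p))]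
    · rw [Set.indicator_of_mem (h4 p)]; simp
    · intro j _ hjne
      have : p ∉ B j := fun hmem => hjne (h5 p j hmem)
      rw [Set.indicator_of_notMem this]; simp
  have hclose : ∀ p, |κ p - s p| ≤ δ := by
    intro p
    rw [hs p, abs_le]
    constructor
    · linarith [h1 p, hδ.le]
    · linarith [h2 p, mul_add δ ((js p) : ℝ) 1]
  set η := ε/(2*N*(δ*N+1)) with hηdef
  have hη : 0 < η := by positivity
  choose F hF herrF using fun j => rc_approx π (hBmeas j) η hη
  refine ⟨fun p => ∑ j ∈ Finset.range N, (δ*(j:ℝ)) * F j p,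
    IsRC.finsetSum N _ (fun j => IsRC.smul _ (hF j)), ?_⟩
  choose MF hMF using fun j => (hF j).bound
  set f : Ω × Ω → ℝ := fun p => ∑ j ∈ Finset.range N, (δ*(j:ℝ)) * F j p with hfdef
  obtain ⟨Mf, hMf⟩ := (IsRC.finsetSum N _ (fun j => IsRC.smul _ (hF j)) : IsRC f).bound
  have hpt : ∀ p, |κ p - f p| ≤ δ + ∑ j ∈ Finset.range N,
      (δ*(j:ℝ)) * |(B j).indicator 1 p - F j p| := by
    intro p
    have hsf : s p - f p = ∑ j ∈ Finset.range N, (δ*(j:ℝ)) * ((B j).indicator 1 p - F j p) := by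
      rw [hsdef, hfdef, ← Finset.sum_sub_distrib]
      exact Finset.sum_congr rfl (fun j _ => by ring)
    calc |κ p - f p| = |(κ p - s p) + (s p - f p)| := by ring_nf
      _ ≤ |κ p - s p| + |s p - f p| := abs_add_le _ _
      _ ≤ δ + ∑ j ∈ Finset.range N, (δ*(j:ℝ)) * |(B j).indicator 1 p - F j p| := by
          apply add_le_add (hclose p)
          rw [hsf]
          refine (Finset.abs_sum_le_sum_abs _ _).trans ?_
          apply Finset.sum_le_sum
          intro j _
          rw [abs_mul, abs_of_nonneg (by positivity : (0:ℝ) ≤ δ*(j:ℝ))]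
    -- done
  have intj : ∀ j, Integrable (fun p => |(B j).indicator (1:Ω×Ω→ℝ) p - F j p|) π := fun j =>
    my_integrable_of_bound π ((measurable_one.indicator (hBmeas j)).sub (hF j).measurable).abs
      (1 + MF j) (fun p => by rw [abs_abs]; exact abs_sub_le_add' (abs_indicator_one_le _) (hMF j p))
  have intsum : Integrable
      (fun p => ∑ j ∈ Finset.range N, (δ*(j:ℝ)) * |(B j).indicator (1:Ω×Ω→ℝ) p - F j p|) π :=
    integrable_finset_sum _ (fun j _ => (intj j).const_mul _)
  have intLHS : Integrable (fun p => |κ p - f p|) π :=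
    my_integrable_of_bound π (hκ.sub ((IsRC.finsetSum N _ (fun j => IsRC.smul _ (hF j)) : IsRC f).measurable)).abs
      (C + Mf) (fun p => by
        rw [abs_abs]
        exact abs_sub_le_add' (by rw [abs_of_nonneg (hnn p)]; exact hC p) (hMf p))
  have harith : (N:ℝ) * ((δ*(N:ℝ)) * η) ≤ ε/2 := by
    rw [hηdef, mul_div_assoc', mul_div_assoc', div_le_div_iff₀ (by positivity) two_pos]
    ring_nf
    nlinarith [mul_pos hNpos hε, mul_nonneg (mul_nonneg hNpos.le hNpos.le) (mul_nonneg hδ.le hε.le)]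
  calc ∫ p, |κ p - f p| ∂π
      ≤ ∫ p, (δ + ∑ j ∈ Finset.range N, (δ*(j:ℝ)) * |(B j).indicator 1 p - F j p|) ∂π :=
        integral_mono intLHS ((integrable_const δ).add intsum) hpt
    _ = δ + ∑ j ∈ Finset.range N, (δ*(j:ℝ)) * ∫ p, |(B j).indicator 1 p - F j p| ∂π := by
        rw [integral_add (integrable_const δ) intsum, integral_const,
          integral_finset_sum _ (fun j _ => (intj j).const_mul _)]
        simp only [measureReal_def, measure_univ, ENNReal.toReal_one, smul_eq_mul, one_mul]
        congr 1
        exact Finset.sum_congr rfl (fun j _ => integral_const_mul (δ*(j:ℝ)) _)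
    _ ≤ δ + ∑ _j ∈ Finset.range N, (δ*(N:ℝ)) * η := by
        apply add_le_add_right
        apply Finset.sum_le_sum
        intro j hj
        have hjN : (j:ℝ) ≤ N := by
          exact_mod_cast (Finset.mem_range.1 hj).le
        apply mul_le_mul
        · apply mul_le_mul_of_nonneg_left hjN hδ.le
        · exact herrF j
        · exact integral_nonneg (fun p => abs_nonneg _)
        · positivity
    _ ≤ ε := by
        rw [Finset.sum_const, Finset.card_range, nsmul_eq_mul]
        rw [hδdef] at *
        linarith [harith]

end aux

lemma rect_integral {Ω : Type*} [MeasurableSpace Ω] (ρ σ : Measure Ω) [IsFiniteMeasure ρ]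
    [IsFiniteMeasure σ] (c : ℝ) {E G : Set Ω} (hE : MeasurableSet E) (hG : MeasurableSet G) :
    ∫ p : Ω × Ω, c * E.indicator 1 p.1 * G.indicator 1 p.2 ∂(ρ.prod σ)
      = c * ((ρ E).toReal * (σ G).toReal) := by
  have heq : ∀ p : Ω × Ω, c * E.indicator 1 p.1 * G.indicator 1 p.2
      = (fun x => c * E.indicator 1 x) p.1 * (fun y => G.indicator (1 : Ω → ℝ) y) p.2 :=
    fun p => by ring
  calc ∫ p : Ω × Ω, c * E.indicator 1 p.1 * G.indicator 1 p.2 ∂(ρ.prod σ)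
      = ∫ p : Ω × Ω, (fun x => c * E.indicator 1 x) p.1
          * (fun y => G.indicator (1 : Ω → ℝ) y) p.2 ∂(ρ.prod σ) :=
        integral_congr_ae (Filter.Eventually.of_forall heq)
    _ = (∫ x, c * E.indicator 1 x ∂ρ) * (∫ y, G.indicator (1 : Ω → ℝ) y ∂σ) :=
        integral_prod_mul (μ := ρ) (ν := σ) (fun x => c * E.indicator 1 x) (fun y => G.indicator (1 : Ω → ℝ) y)
    _ = c * ((ρ E).toReal * (σ G).toReal) := by
        rw [integral_const_mul, integral_indicator_one hE, integral_indicator_one hG,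
          measureReal_def, measureReal_def]
        ring

lemma my_abs_integral {X : Type*} [MeasurableSpace X] (π : Measure X) (f : X → ℝ) :
    |∫ x, f x ∂π| ≤ ∫ x, |f x| ∂π := by
  simpa [Real.norm_eq_abs] using norm_integral_le_integral_norm (μ := π) f



theorem exists_maximal_independent_set {Ω : Type*} [MeasurableSpace Ω]
    (μ : Measure Ω) [IsProbabilityMeasure μ] (k : Ω → Ω → ℝ)
    (hk : Measurable (Function.uncurry k)) (hknn : ∀ x y, 0 ≤ k x y)
    (hbd : ∃ C : ℝ, ∀ x y, k x y ≤ C) :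
    ∃ A : Set Ω, MeasurableSet A ∧
      (∀ᵐ p ∂(μ.prod μ), p.1 ∈ A → p.2 ∈ A → k p.1 p.2 = 0) ∧
      μ A = sSup {r : ENNReal | ∃ B : Set Ω, MeasurableSet B ∧
        (∀ᵐ p ∂(μ.prod μ), p.1 ∈ B → p.2 ∈ B → k p.1 p.2 = 0) ∧ r = μ B} := by
  classical
  obtain ⟨C, hC⟩ := hbd
  have hΩne : Nonempty Ω := by
    by_contra h
    have huniv : (univ : Set Ω) = ∅ := Set.univ_eq_empty_iff.2 (not_nonempty_iff.1 h)
    have hμ := measure_univ (μ := μ)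
    rw [huniv] at hμ
    simp at hμ
  have hC0 : 0 ≤ C := le_trans (hknn hΩne.some hΩne.some) (hC _ _)
  have hkm : Measurable fun p : Ω × Ω => k p.1 p.2 := hk
  set S := {r : ENNReal | ∃ B : Set Ω, MeasurableSet B ∧
      (∀ᵐ p ∂(μ.prod μ), p.1 ∈ B → p.2 ∈ B → k p.1 p.2 = 0) ∧ r = μ B} with hSdef
  set α := sSup S with hαdef
  have hS0 : (0:ℝ≥0∞) ∈ S :=
    ⟨∅, MeasurableSet.empty, Eventually.of_forall (by simp), by simp⟩
  have hα1 : α ≤ 1 := sSup_le (by rintro r ⟨B, -, -, rfl⟩; exact prob_le_one)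
  have hαtop : α ≠ ⊤ := (hα1.trans_lt (by norm_num)).ne
  -- approximating sequence
  have hseq : ∀ n : ℕ, ∃ B : Set Ω, MeasurableSet B ∧
      (∀ᵐ p ∂(μ.prod μ), p.1 ∈ B → p.2 ∈ B → k p.1 p.2 = 0) ∧
      α ≤ μ B + ENNReal.ofReal ((n:ℝ)+1)⁻¹ ∧ μ B ≤ α := by
    intro n
    set ε : ℝ≥0∞ := ENNReal.ofReal ((n:ℝ)+1)⁻¹ with hεdef
    have hε0 : ε ≠ 0 := (ENNReal.ofReal_pos.2 (by positivity)).ne'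
    by_cases hle : α ≤ ε
    · refine ⟨∅, MeasurableSet.empty, Eventually.of_forall (by simp), ?_, ?_⟩
      · simpa using hle
      · simpa using (le_sSup hS0 : (0:ℝ≥0∞) ≤ α)
    · push_neg at hle
      have hsub : α - ε < α := ENNReal.sub_lt_self hαtop (by
        intro h0; rw [h0] at hle; exact (not_lt_of_ge zero_le) hle) hε0
      obtain ⟨r, hrS, hr⟩ := lt_sSup_iff.1 (show α - ε < sSup S from hαdef ▸ hsub)
      obtain ⟨B, hBm, hBi, rfl⟩ := hrS
      refine ⟨B, hBm, hBi, ?_, le_sSup ⟨B, hBm, hBi, rfl⟩⟩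
      calc α = α - ε + ε := (tsub_add_cancel_of_le hle.le).symm
        _ ≤ μ B + ε := add_le_add_left hr.le _
  choose A hAm hAi hAlb hAub using hseq
  -- real convergence of μ (A n) to α
  have hinv0 : Tendsto (fun n : ℕ => ((n:ℝ)+1)⁻¹) atTop (𝓝 0) := by
    simpa only [one_div] using tendsto_one_div_add_atTop_nhds_zero_nat (𝕜 := ℝ)
  have hconv : Tendsto (fun n => (μ (A n)).toReal) atTop (𝓝 α.toReal) := by
    have hup : ∀ n : ℕ, (μ (A n)).toReal ≤ α.toReal :=
      fun n => ENNReal.toReal_mono hαtop (hAub n)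
    have hlow : ∀ n : ℕ, α.toReal - ((n:ℝ)+1)⁻¹ ≤ (μ (A n)).toReal := by
      intro n
      have h := ENNReal.toReal_mono (by
          exact ENNReal.add_ne_top.2 ⟨measure_ne_top μ _, ENNReal.ofReal_ne_top⟩) (hAlb n)
      rw [ENNReal.toReal_add (measure_ne_top μ _) ENNReal.ofReal_ne_top,
        ENNReal.toReal_ofReal (by positivity)] at h
      linarith
    have hlowt : Tendsto (fun n : ℕ => α.toReal - ((n:ℝ)+1)⁻¹) atTop (𝓝 (α.toReal - 0)) :=
      tendsto_const_nhds.sub hinv0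
    rw [sub_zero] at hlowt
    exact tendsto_of_tendsto_of_tendsto_of_le_of_le hlowt tendsto_const_nhds hlow hup
  -- ultrafilter limits
  set U : Ultrafilter ℕ := Ultrafilter.of atTop with hUdef
  have hU : (U : Filter ℕ) ≤ atTop := Ultrafilter.of_le _
  have hmem01 : ∀ (E : Set Ω) (n : ℕ), (μ (E ∩ A n)).toReal ∈ Set.Icc (0:ℝ) 1 :=
    fun E n => ⟨ENNReal.toReal_nonneg, by
      have := ENNReal.toReal_mono (by norm_num : (1:ℝ≥0∞) ≠ ⊤) (prob_le_one (μ := μ) (s := E ∩ A n))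
      simpa using this⟩
  choose ν₀ hν₀mem hν₀ using fun E : Set Ω =>
    ulim_exists U (fun n => (μ (E ∩ A n)).toReal) (hmem01 E)
  have hν₀nonneg : ∀ E, 0 ≤ ν₀ E := fun E => (hν₀mem E).1
  have hν₀le : ∀ E, ν₀ E ≤ (μ E).toReal := fun E =>
    le_of_tendsto (hν₀ E) (Eventually.of_forall fun n =>
      ENNReal.toReal_mono (measure_ne_top μ E) (measure_mono inter_subset_left))
  have hν₀empty : ν₀ ∅ = 0 :=
    tendsto_nhds_unique (hν₀ ∅) (by simpa using (tendsto_const_nhds :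
      Tendsto (fun _ : ℕ => (0:ℝ)) U (𝓝 0)))
  have hν₀union : ∀ E F : Set Ω, MeasurableSet F → Disjoint E F →
      ν₀ (E ∪ F) = ν₀ E + ν₀ F := by
    intro E F hF hd
    refine tendsto_nhds_unique (hν₀ (E ∪ F)) (Tendsto.congr (fun n => ?_) ((hν₀ E).add (hν₀ F)))
    rw [Set.union_inter_distrib_right,
      measure_union (hd.mono inter_subset_left inter_subset_left) (hF.inter (hAm n)),
      ENNReal.toReal_add (measure_ne_top _ _) (measure_ne_top _ _)]
  -- countable additivity
  have hadd : ∀ (f : ℕ → Set Ω), (∀ i, MeasurableSet (f i)) → Pairwise (Disjoint on f) →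
      HasSum (fun i => ν₀ (f i)) (ν₀ (⋃ i, f i)) := by
    intro f hm hd
    have key : ∀ m, ν₀ (⋃ i, f i) = (∑ i ∈ Finset.range m, ν₀ (f i)) + ν₀ (⋃ i, f (i + m)) := by
      intro m
      induction m with
      | zero => simp
      | succ n ih =>
        have hsplit : (⋃ i, f (i + n)) = f n ∪ ⋃ i, f (i + (n+1)) := by
          ext x
          simp only [Set.mem_iUnion, Set.mem_union]
          constructor
          · rintro ⟨i, hi⟩
            rcases i with _ | i
            · left; simpa using hi
            · right; exact ⟨i, by rw [show i + (n+1) = i + 1 + n by omega]; exact hi⟩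
          · rintro (h | ⟨i, hi⟩)
            · exact ⟨0, by simpa using h⟩
            · exact ⟨i+1, by rw [show i + 1 + n = i + (n+1) by omega]; exact hi⟩
        have hdisj2 : Disjoint (f n) (⋃ i, f (i + (n+1))) := by
          rw [Set.disjoint_iUnion_right]
          exact fun i => hd (by omega)
        rw [ih, hsplit, hν₀union (f n) _ (MeasurableSet.iUnion fun i => hm _) hdisj2,
          Finset.sum_range_succ]
        ring
    have htail0 : Tendsto (fun m => ν₀ (⋃ i, f (i + m))) atTop (𝓝 0) := by
      refine tendsto_of_tendsto_of_tendsto_of_le_of_le tendsto_const_nhds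
        (tail_tendsto μ f hm hd) (fun m => hν₀nonneg _) (fun m => hν₀le _)
    have hten : Tendsto (fun m => ∑ i ∈ Finset.range m, ν₀ (f i)) atTop (𝓝 (ν₀ (⋃ i, f i))) := by
      have hcong : ∀ m, ∑ i ∈ Finset.range m, ν₀ (f i)
          = ν₀ (⋃ i, f i) - ν₀ (⋃ i, f (i + m)) := fun m => by rw [key m]; ring
      have := (tendsto_const_nhds (x := ν₀ (⋃ i, f i)) (f := atTop)).sub htail0
      rw [sub_zero] at this
      exact Tendsto.congr (fun m => (hcong m).symm) this
    exact (hasSum_iff_tendsto_nat_of_nonneg (fun i => hν₀nonneg _) _).2 hten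
  -- the limit measure ν
  set ν : Measure Ω := Measure.ofMeasurable (fun E _ => ENNReal.ofReal (ν₀ E))
    (by show ENNReal.ofReal (ν₀ ∅) = 0; rw [hν₀empty]; simp)
    (by
      intro f hm hd
      show ENNReal.ofReal (ν₀ (⋃ i, f i)) = ∑' i, ENNReal.ofReal (ν₀ (f i))
      have hs := hadd f hm hd
      rw [← hs.tsum_eq, ENNReal.ofReal_tsum_of_nonneg (fun i => hν₀nonneg _) hs.summable]) with hνdef
  have hνE : ∀ E : Set Ω, MeasurableSet E → ν E = ENNReal.ofReal (ν₀ E) := fun E hE =>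
    Measure.ofMeasurable_apply E hE
  have hνle : ν ≤ μ := by
    rw [Measure.le_iff]
    intro E hE
    rw [hνE E hE]
    calc ENNReal.ofReal (ν₀ E) ≤ ENNReal.ofReal ((μ E).toReal) :=
          ENNReal.ofReal_le_ofReal (hν₀le E)
      _ = μ E := ENNReal.ofReal_toReal (measure_ne_top μ E)
  haveI hνfin : IsFiniteMeasure ν := ⟨by
    rw [hνE univ MeasurableSet.univ]; exact ENNReal.ofReal_lt_top⟩
  have hνac : ν ≪ μ := Measure.absolutelyContinuous_of_le hνle
  set g : Ω → ℝ≥0∞ := ν.rnDeriv μ with hgdef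
  have hgm : Measurable g := Measure.measurable_rnDeriv ν μ
  have hwd : μ.withDensity g = ν := Measure.withDensity_rnDeriv_eq ν μ hνac
  set Aset : Set Ω := (g ⁻¹' {0})ᶜ with hAsetdef
  have hAsetm : MeasurableSet Aset := (hgm (measurableSet_singleton 0)).compl
  have hνAc : ν Asetᶜ = 0 := by
    rw [← hwd, withDensity_apply g hAsetm.compl]
    have h0 : ∫⁻ x in Asetᶜ, g x ∂μ = ∫⁻ x in Asetᶜ, 0 ∂μ := by
      apply setLIntegral_congr_fun hAsetm.compl
      intro x hx
      simpa [hAsetdef] using hx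
    rw [h0]
    simp
  have hνuniv : ν univ = α := by
    rw [hνE univ MeasurableSet.univ]
    have h1 : ν₀ univ = α.toReal := by
      refine tendsto_nhds_unique (Tendsto.congr (fun n => by rw [Set.univ_inter]) (hν₀ univ)) ?_
      exact hconv.mono_left hU
    rw [h1, ENNReal.ofReal_toReal hαtop]
  have hνAset : ν Aset = α := by
    have h2 := measure_add_measure_compl (μ := ν) hAsetm
    rw [hνAc, add_zero, hνuniv] at h2
    exact h2
  -- product measure comparison
  have hprodle : ν.prod ν ≤ μ.prod μ := by
    rw [Measure.le_iff]
    intro W hW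
    rw [Measure.prod_apply hW, Measure.prod_apply hW]
    calc ∫⁻ x, ν (Prod.mk x ⁻¹' W) ∂ν
        ≤ ∫⁻ x, μ (Prod.mk x ⁻¹' W) ∂ν :=
          lintegral_mono (fun x => Measure.le_iff'.1 hνle _)
      _ ≤ ∫⁻ x, μ (Prod.mk x ⁻¹' W) ∂μ := lintegral_mono' hνle le_rfl
  -- independence: set integrals vanish
  have hI : ∀ n, ∫ p in (A n) ×ˢ (A n), k p.1 p.2 ∂(μ.prod μ) = 0 := by
    intro n
    have hzero : (fun p : Ω × Ω => k p.1 p.2) =ᵐ[(μ.prod μ).restrict ((A n) ×ˢ (A n))]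
        (fun _ => (0:ℝ)) := by
      rw [EventuallyEq, ae_restrict_iff' ((hAm n).prod (hAm n))]
      filter_upwards [hAi n] with p hp hmem
      exact hp hmem.1 hmem.2
    rw [integral_congr_ae hzero, integral_zero]
  -- key limit along the ultrafilter for rectangle combinations
  have keylim : ∀ f : Ω × Ω → ℝ, IsRC f →
      Tendsto (fun n => ∫ p in (A n) ×ˢ (A n), f p ∂(μ.prod μ)) (U : Filter ℕ)
        (𝓝 (∫ p, f p ∂(ν.prod ν))) := by
    intro f hf
    induction hf with
    | rect c E G hE hG =>
      have hres : ∀ n, ∫ p in (A n) ×ˢ (A n),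
          c * E.indicator 1 p.1 * G.indicator 1 p.2 ∂(μ.prod μ)
          = c * ((μ (E ∩ A n)).toReal * (μ (G ∩ A n)).toReal) := by
        intro n
        rw [← Measure.prod_restrict, rect_integral (μ.restrict (A n)) (μ.restrict (A n)) c hE hG,
          Measure.restrict_apply hE, Measure.restrict_apply hG]
      have hres2 : ∫ p, c * E.indicator 1 p.1 * G.indicator 1 p.2 ∂(ν.prod ν)
          = c * (ν₀ E * ν₀ G) := by
        rw [rect_integral ν ν c hE hG, hνE E hE, hνE G hG,
          ENNReal.toReal_ofReal (hν₀nonneg E), ENNReal.toReal_ofReal (hν₀nonneg G)]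
      rw [hres2]
      refine Tendsto.congr (fun n => (hres n).symm) ?_
      exact (((hν₀ E).mul (hν₀ G))).const_mul c
    | @add f1 f2 hf1 hf2 ih1 ih2 =>
      obtain ⟨M1, hM1⟩ := hf1.bound
      obtain ⟨M2, hM2⟩ := hf2.bound
      have i1 : Integrable f1 (μ.prod μ) := my_integrable_of_bound _ hf1.measurable M1 hM1
      have i2 : Integrable f2 (μ.prod μ) := my_integrable_of_bound _ hf2.measurable M2 hM2
      have i1' : Integrable f1 (ν.prod ν) := my_integrable_of_bound _ hf1.measurable M1 hM1
      have i2' : Integrable f2 (ν.prod ν) := my_integrable_of_bound _ hf2.measurable M2 hM2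
      have hres : ∀ n, ∫ p in (A n) ×ˢ (A n), (f1 p + f2 p) ∂(μ.prod μ)
          = (∫ p in (A n) ×ˢ (A n), f1 p ∂(μ.prod μ))
            + ∫ p in (A n) ×ˢ (A n), f2 p ∂(μ.prod μ) :=
        fun n => integral_add i1.restrict i2.restrict
      have hres2 : ∫ p, (f1 p + f2 p) ∂(ν.prod ν)
          = (∫ p, f1 p ∂(ν.prod ν)) + ∫ p, f2 p ∂(ν.prod ν) := integral_add i1' i2'
      rw [hres2]
      exact Tendsto.congr (fun n => (hres n).symm) (ih1.add ih2)
    | @smul r f1 hf1 ih =>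
      have hres : ∀ n, ∫ p in (A n) ×ˢ (A n), r * f1 p ∂(μ.prod μ)
          = r * ∫ p in (A n) ×ˢ (A n), f1 p ∂(μ.prod μ) := fun n => integral_const_mul r _
      have hres2 : ∫ p, r * f1 p ∂(ν.prod ν) = r * ∫ p, f1 p ∂(ν.prod ν) := integral_const_mul r _
      rw [hres2]
      exact Tendsto.congr (fun n => (hres n).symm) (ih.const_mul r)
  -- integrability of k
  have intk2 : Integrable (fun p : Ω × Ω => k p.1 p.2) (μ.prod μ) :=
    my_integrable_of_bound _ hkm C (fun p => by rw [abs_of_nonneg (hknn _ _)]; exact hC _ _)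
  have intkν : Integrable (fun p : Ω × Ω => k p.1 p.2) (ν.prod ν) :=
    my_integrable_of_bound _ hkm C (fun p => by rw [abs_of_nonneg (hknn _ _)]; exact hC _ _)
  -- main claim : ∫ k dν² = 0
  have hmain : ∫ p, k p.1 p.2 ∂(ν.prod ν) = 0 := by
    set t := ∫ p, k p.1 p.2 ∂(ν.prod ν) with htdef
    have habs : ∀ ε : ℝ, 0 < ε → |t| ≤ 2*ε := by
      intro ε hε
      obtain ⟨f, hf, herr⟩ := rc_approx_kernel (μ.prod μ) (κ := fun p => k p.1 p.2) hkm
        (fun p => hknn _ _) (fun p => hC _ _) hε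
      obtain ⟨Mf, hMf⟩ := hf.bound
      have intf2 : Integrable f (μ.prod μ) := my_integrable_of_bound _ hf.measurable Mf hMf
      have intfν : Integrable f (ν.prod ν) := my_integrable_of_bound _ hf.measurable Mf hMf
      have intabs : Integrable (fun p : Ω × Ω => |k p.1 p.2 - f p|) (μ.prod μ) :=
        my_integrable_of_bound _ (hkm.sub hf.measurable).abs (C + Mf) (fun p => by
          rw [abs_abs, sub_eq_add_neg]
          refine (abs_add_le _ _).trans ?_
          rw [abs_neg, abs_of_nonneg (hknn _ _)]
          exact add_le_add (hC _ _) (hMf p))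
      have h1 : ∀ n, |∫ p in (A n) ×ˢ (A n), f p ∂(μ.prod μ)| ≤ ε := by
        intro n
        calc |∫ p in (A n) ×ˢ (A n), f p ∂(μ.prod μ)|
            = |∫ p in (A n) ×ˢ (A n), (f p - k p.1 p.2) ∂(μ.prod μ)| := by
              rw [integral_sub intf2.restrict intk2.restrict, hI n, sub_zero]
          _ ≤ ∫ p in (A n) ×ˢ (A n), |f p - k p.1 p.2| ∂(μ.prod μ) := my_abs_integral _ _
          _ = ∫ p in (A n) ×ˢ (A n), |k p.1 p.2 - f p| ∂(μ.prod μ) := by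
              simp_rw [abs_sub_comm]
          _ ≤ ∫ p, |k p.1 p.2 - f p| ∂(μ.prod μ) :=
              setIntegral_le_integral intabs (Eventually.of_forall fun p => abs_nonneg _)
          _ ≤ ε := herr
      have h2 : |∫ p, f p ∂(ν.prod ν)| ≤ ε :=
        le_of_tendsto (keylim f hf).abs (Eventually.of_forall h1)
      have h3 : |t - ∫ p, f p ∂(ν.prod ν)| ≤ ε := by
        calc |t - ∫ p, f p ∂(ν.prod ν)| = |∫ p, (k p.1 p.2 - f p) ∂(ν.prod ν)| := by
              rw [integral_sub intkν intfν]
          _ ≤ ∫ p, |k p.1 p.2 - f p| ∂(ν.prod ν) := my_abs_integral _ _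
          _ ≤ ∫ p, |k p.1 p.2 - f p| ∂(μ.prod μ) :=
              integral_mono_measure hprodle (Eventually.of_forall fun p => abs_nonneg _) intabs
          _ ≤ ε := herr
      calc |t| = |(t - ∫ p, f p ∂(ν.prod ν)) + ∫ p, f p ∂(ν.prod ν)| := by ring_nf
        _ ≤ |t - ∫ p, f p ∂(ν.prod ν)| + |∫ p, f p ∂(ν.prod ν)| := abs_add_le _ _
        _ ≤ 2*ε := by linarith
    by_contra ht
    have hpos : 0 < |t| := abs_pos.2 ht
    have := habs (|t|/4) (by positivity)
    linarith
  -- k vanishes ν⊗ν-a.e.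
  have hae : (fun p : Ω × Ω => k p.1 p.2) =ᵐ[ν.prod ν] 0 :=
    (integral_eq_zero_iff_of_nonneg_ae (Eventually.of_forall fun p => hknn _ _) intkν).1 hmain
  -- product withDensity representation
  have hprodwd : ν.prod ν = (μ.prod μ).withDensity (fun p => g p.1 * g p.2) := by
    apply Measure.prod_eq
    intro s t' hs ht'
    rw [withDensity_apply _ (hs.prod ht')]
    have heq : ∫⁻ p in s ×ˢ t', g p.1 * g p.2 ∂(μ.prod μ)
        = ∫⁻ p : Ω × Ω, (s.indicator g p.1) * (t'.indicator g p.2) ∂(μ.prod μ) := by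
      rw [← lintegral_indicator (hs.prod ht')]
      congr 1
      funext p
      by_cases h1 : p.1 ∈ s <;> by_cases h2 : p.2 ∈ t' <;>
        simp [Set.indicator_apply, Set.mem_prod, h1, h2]
    rw [heq, lintegral_prod_mul (hgm.indicator hs).aemeasurable (hgm.indicator ht').aemeasurable,
      lintegral_indicator hs, lintegral_indicator ht', ← withDensity_apply g hs,
      ← withDensity_apply g ht', hwd]
  -- transfer the null set
  have hN'm : MeasurableSet {p : Ω × Ω | ¬ k p.1 p.2 = 0} :=
    (hkm (measurableSet_singleton 0)).compl
  have hν2N : (ν.prod ν) {p : Ω × Ω | ¬ k p.1 p.2 = 0} = 0 := by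
    have := ae_iff.1 hae
    simpa using this
  have hggzero : ∀ᵐ p ∂(μ.prod μ), p ∈ {p : Ω × Ω | ¬ k p.1 p.2 = 0} → g p.1 * g p.2 = 0 := by
    rw [hprodwd] at hν2N
    rw [withDensity_apply _ hN'm] at hν2N
    have hmeas : Measurable fun p : Ω × Ω => g p.1 * g p.2 :=
      (hgm.comp measurable_fst).mul (hgm.comp measurable_snd)
    have h0 := (lintegral_eq_zero_iff
      (μ := (μ.prod μ).restrict {p : Ω × Ω | ¬ k p.1 p.2 = 0}) hmeas).1 hν2N
    exact (ae_restrict_iff' hN'm).1 h0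
  have hfinalae : ∀ᵐ p ∂(μ.prod μ), p.1 ∈ Aset → p.2 ∈ Aset → k p.1 p.2 = 0 := by
    filter_upwards [hggzero] with p hp h1 h2
    by_contra hk0
    have := hp hk0
    rcases mul_eq_zero.1 this with h | h
    · exact h1 (by simpa [hAsetdef] using h)
    · exact h2 (by simpa [hAsetdef] using h)
  -- conclusion
  refine ⟨Aset, hAsetm, hfinalae, ?_⟩
  have hle1 : μ Aset ≤ α := le_sSup ⟨Aset, hAsetm, hfinalae, rfl⟩
  have hge : α ≤ μ Aset := by
    rw [← hνAset]
    exact Measure.le_iff'.1 hνle Aset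
  exact le_antisymm hle1 hge
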